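/- Define θ_α(z) = θ(z + ατ/n) θ(z + ατ/n + 1/n) ⋯ θ(z + ατ/n + (n−1)/n) · e^{2πi(αz + α(α−n)τ/(2n) + α/(2n))} for α ∈ ℤ. Then θ_α ∈ Θ_{n,(n−1)/2}(Γ), θ_{α+n} = θ_α, θ_α(z + 1/n) = e^{2πiα/n} θ_α(z), and θ_α(z + τ/n) = e^{−2πi(z + 1/(2n) − (n−1)τ/(2n))} θ_{α+1}(z). -/

import Mathlib

open Complex

/-- The theta function `θ(z) = Σ_{α∈ℤ} (−1)^α e^{2πi(αz + α(α−1)τ/2)}`. -/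
noncomputable def theta (τ z : ℂ) : ℂ :=
  ∑' α : ℤ, (-1 : ℂ) ^ α *
    Complex.exp (2 * Real.pi * I * ((α : ℂ) * z + (α : ℂ) * ((α : ℂ) - 1) / 2 * τ))

/-- `θ_α(z) = θ(z+ατ/n) θ(z+ατ/n+1/n) ⋯ θ(z+ατ/n+(n−1)/n) ·
e^{2πi(αz + α(α−n)τ/(2n) + α/(2n))}`. -/
noncomputable def thetaA (τ : ℂ) (n : ℕ) (α : ℤ) (z : ℂ) : ℂ :=
  (∏ j ∈ Finset.range n, theta τ (z + (α : ℂ) * τ / (n : ℂ) + (j : ℂ) / (n : ℂ))) *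
    Complex.exp (2 * Real.pi * I *
      ((α : ℂ) * z + (α : ℂ) * ((α : ℂ) - (n : ℂ)) * τ / (2 * (n : ℂ)) +
        (α : ℂ) / (2 * (n : ℂ))))

/-- The space `Θ_{n,c}(Γ)`. -/
def IsThetaFun (τ : ℂ) (n : ℕ) (c : ℂ) (f : ℂ → ℂ) : Prop :=
  Differentiable ℂ f ∧ (∀ z, f (z + 1) = f z) ∧
    ∀ z, f (z + τ) =
      (-1 : ℂ) ^ n * Complex.exp (-(2 * Real.pi * I) * ((n : ℂ) * z - c)) * f z

lemma theta_eq (τ z : ℂ) : theta τ z = jacobiTheta₂ (z + (1 - τ) / 2) τ := by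
  unfold theta jacobiTheta₂ jacobiTheta₂_term
  refine tsum_congr fun α => ?_
  have h1 : ((-1 : ℂ)) ^ α = Complex.exp ((α : ℂ) * (Real.pi * I)) := by
    rw [Complex.exp_int_mul, Complex.exp_pi_mul_I]
  rw [h1, ← Complex.exp_add]
  congr 1
  ring

lemma theta_add_one (τ z : ℂ) : theta τ (z + 1) = theta τ z := by
  rw [theta_eq, theta_eq, show z + 1 + (1 - τ)/2 = z + (1 - τ)/2 + 1 by ring,
    jacobiTheta₂_add_left]

lemma theta_add_tau (τ z : ℂ) :
    theta τ (z + τ) = -Complex.exp (-(2 * Real.pi * I) * z) * theta τ z := by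
  rw [theta_eq, theta_eq, show z + τ + (1 - τ)/2 = (z + (1 - τ)/2) + τ by ring,
    jacobiTheta₂_add_left']
  congr 1
  rw [show -(Real.pi:ℂ) * I * (τ + 2*(z + (1 - τ)/2)) = -(2 * Real.pi * I) * z + (-(Real.pi * I)) by ring,
    Complex.exp_add, Complex.exp_neg, Complex.exp_pi_mul_I]
  norm_num

lemma differentiable_theta {τ : ℂ} (hτ : 0 < τ.im) : Differentiable ℂ (theta τ) := by
  have h : Differentiable ℂ (jacobiTheta₂ · τ) := fun z => differentiableAt_jacobiTheta₂_fst z hτ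
  have h2 : theta τ = fun z => jacobiTheta₂ (z + (1 - τ)/2) τ := funext fun z => theta_eq τ z
  rw [h2]
  exact h.comp (differentiable_id.add_const _)

lemma prod_range_cycle {M : Type*} [CommMonoid M] (F : ℕ → M) :
    ∀ n : ℕ, F n = F 0 → ∏ j ∈ Finset.range n, F (j + 1) = ∏ j ∈ Finset.range n, F j
  | 0, _ => rfl
  | (m+1), h => by rw [Finset.prod_range_succ, Finset.prod_range_succ', h]

lemma exp_eq_exp_int (a b : ℂ) (k : ℤ) (h : a = b + k * (2 * Real.pi * I)) :
    Complex.exp a = Complex.exp b := by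
  rw [h, Complex.exp_add, Complex.exp_int_mul_two_pi_mul_I, mul_one]

lemma sum_range_cast (n : ℕ) : (∑ j ∈ Finset.range n, (j:ℂ)) = n * (n - 1) / 2 := by
  induction n with
  | zero => simp
  | succ m ih => rw [Finset.sum_range_succ, ih]; push_cast; ring

set_option maxHeartbeats 1000000 in
/-- `θ_α ∈ Θ_{n,(n−1)/2}(Γ)`, `θ_{α+n} = θ_α`, `θ_α(z+1/n) = e^{2πiα/n} θ_α(z)`, and
`θ_α(z+τ/n) = e^{−2πi(z+1/(2n)−(n−1)τ/(2n))} θ_{α+1}(z)`. -/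
theorem thetaA_properties (τ : ℂ) (hτ : 0 < τ.im) (n : ℕ) (hn : 0 < n) (α : ℤ) :
    IsThetaFun τ n (((n : ℂ) - 1) / 2) (thetaA τ n α) ∧
    thetaA τ n (α + n) = thetaA τ n α ∧
    (∀ z, thetaA τ n α (z + 1 / (n : ℂ)) =
      Complex.exp (2 * Real.pi * I * (α : ℂ) / (n : ℂ)) * thetaA τ n α z) ∧
    (∀ z, thetaA τ n α (z + τ / (n : ℂ)) =
      Complex.exp (-(2 * Real.pi * I) *
        (z + 1 / (2 * (n : ℂ)) - ((n : ℂ) - 1) / (2 * (n : ℂ)) * τ)) *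
        thetaA τ n (α + 1) z) := by
  have hc : (n : ℂ) ≠ 0 := Nat.cast_ne_zero.mpr hn.ne'
  refine ⟨⟨?_, ?_, ?_⟩, ?_, ?_, ?_⟩
  · -- differentiable
    unfold thetaA
    refine Differentiable.mul ?_ ?_
    · refine Differentiable.fun_finset_prod fun j _ => ?_
      exact (differentiable_theta hτ).comp (by fun_prop)
    · apply Differentiable.cexp
      fun_prop
  · -- z + 1
    intro z
    unfold thetaA
    congr 1
    · refine Finset.prod_congr rfl fun j _ => ?_
      rw [show z + 1 + (α:ℂ)*τ/(n:ℂ) + (j:ℂ)/(n:ℂ) = (z + (α:ℂ)*τ/(n:ℂ) + (j:ℂ)/(n:ℂ)) + 1 by ring,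
        theta_add_one]
    · exact exp_eq_exp_int _ _ α (by ring)
  · -- z + τ
    intro z
    unfold thetaA
    have hprod : (∏ j ∈ Finset.range n, theta τ (z + τ + (α:ℂ)*τ/(n:ℂ) + (j:ℂ)/(n:ℂ)))
        = ((-1:ℂ)^n *
            Complex.exp (∑ j ∈ Finset.range n, -(2*(Real.pi:ℂ)*I) * (z + (α:ℂ)*τ/(n:ℂ) + (j:ℂ)/(n:ℂ)))) *
          ∏ j ∈ Finset.range n, theta τ (z + (α:ℂ)*τ/(n:ℂ) + (j:ℂ)/(n:ℂ)) := by
      rw [Complex.exp_sum, show ((-1:ℂ))^n = ∏ _j ∈ Finset.range n, (-1:ℂ) by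
          rw [Finset.prod_const, Finset.card_range], ← Finset.prod_mul_distrib,
        ← Finset.prod_mul_distrib]
      refine Finset.prod_congr rfl fun j _ => ?_
      rw [show z + τ + (α:ℂ)*τ/(n:ℂ) + (j:ℂ)/(n:ℂ) = (z + (α:ℂ)*τ/(n:ℂ) + (j:ℂ)/(n:ℂ)) + τ by ring,
        theta_add_tau]
      ring
    have hsum : (∑ j ∈ Finset.range n, -(2*(Real.pi:ℂ)*I) * (z + (α:ℂ)*τ/(n:ℂ) + (j:ℂ)/(n:ℂ)))
        = -(2*(Real.pi:ℂ)*I) * ((n:ℂ)*z + (α:ℂ)*τ + ((n:ℂ)-1)/2) := by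
      rw [← Finset.mul_sum, Finset.sum_add_distrib, Finset.sum_const, Finset.card_range,
        ← Finset.sum_div, sum_range_cast, nsmul_eq_mul]
      field_simp
    rw [hprod, hsum]
    have hexp : Complex.exp (-(2*(Real.pi:ℂ)*I) * ((n:ℂ)*z + (α:ℂ)*τ + ((n:ℂ)-1)/2)) *
        Complex.exp (2 * Real.pi * I *
          ((α : ℂ) * (z + τ) + (α : ℂ) * ((α : ℂ) - (n : ℂ)) * τ / (2 * (n : ℂ)) +
            (α : ℂ) / (2 * (n : ℂ)))) =
        Complex.exp (-(2 * Real.pi * I) * ((n : ℂ) * z - ((n : ℂ) - 1) / 2)) *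
        Complex.exp (2 * Real.pi * I *
          ((α : ℂ) * z + (α : ℂ) * ((α : ℂ) - (n : ℂ)) * τ / (2 * (n : ℂ)) +
            (α : ℂ) / (2 * (n : ℂ)))) := by
      rw [← Complex.exp_add, ← Complex.exp_add]
      refine exp_eq_exp_int _ _ (1 - (n:ℤ)) ?_
      push_cast
      field_simp
      ring
    linear_combination ((-1:ℂ)^n * ∏ j ∈ Finset.range n, theta τ (z + (α:ℂ)*τ/(n:ℂ) + (j:ℂ)/(n:ℂ))) * hexp
  · -- α + n
    funext z
    unfold thetaA
    have hprod : (∏ j ∈ Finset.range n, theta τ (z + ((α + (n:ℤ) : ℤ):ℂ)*τ/(n:ℂ) + (j:ℂ)/(n:ℂ)))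
        = ((-1:ℂ)^n *
            Complex.exp (∑ j ∈ Finset.range n, -(2*(Real.pi:ℂ)*I) * (z + (α:ℂ)*τ/(n:ℂ) + (j:ℂ)/(n:ℂ)))) *
          ∏ j ∈ Finset.range n, theta τ (z + (α:ℂ)*τ/(n:ℂ) + (j:ℂ)/(n:ℂ)) := by
      rw [Complex.exp_sum, show ((-1:ℂ))^n = ∏ _j ∈ Finset.range n, (-1:ℂ) by
          rw [Finset.prod_const, Finset.card_range], ← Finset.prod_mul_distrib,
        ← Finset.prod_mul_distrib]
      refine Finset.prod_congr rfl fun j _ => ?_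
      rw [show z + ((α + (n:ℤ) : ℤ):ℂ)*τ/(n:ℂ) + (j:ℂ)/(n:ℂ)
            = (z + (α:ℂ)*τ/(n:ℂ) + (j:ℂ)/(n:ℂ)) + τ by push_cast; field_simp; ring,
        theta_add_tau]
      ring
    have hsum : (∑ j ∈ Finset.range n, -(2*(Real.pi:ℂ)*I) * (z + (α:ℂ)*τ/(n:ℂ) + (j:ℂ)/(n:ℂ)))
        = -(2*(Real.pi:ℂ)*I) * ((n:ℂ)*z + (α:ℂ)*τ + ((n:ℂ)-1)/2) := by
      rw [← Finset.mul_sum, Finset.sum_add_distrib, Finset.sum_const, Finset.card_range,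
        ← Finset.sum_div, sum_range_cast, nsmul_eq_mul]
      field_simp
    rw [hprod, hsum]
    have hneg : ((-1:ℂ))^n = Complex.exp ((n:ℂ) * ((Real.pi:ℂ) * I)) := by
      rw [Complex.exp_nat_mul, Complex.exp_pi_mul_I]
    have hexp : Complex.exp ((n:ℂ) * ((Real.pi:ℂ) * I)) *
        Complex.exp (-(2*(Real.pi:ℂ)*I) * ((n:ℂ)*z + (α:ℂ)*τ + ((n:ℂ)-1)/2)) *
        Complex.exp (2 * Real.pi * I *
          (((α + (n:ℤ) : ℤ):ℂ) * z + ((α + (n:ℤ) : ℤ):ℂ) * (((α + (n:ℤ) : ℤ):ℂ) - (n : ℂ)) * τ / (2 * (n : ℂ)) +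
            ((α + (n:ℤ) : ℤ):ℂ) / (2 * (n : ℂ)))) =
        Complex.exp (2 * Real.pi * I *
          ((α : ℂ) * z + (α : ℂ) * ((α : ℂ) - (n : ℂ)) * τ / (2 * (n : ℂ)) +
            (α : ℂ) / (2 * (n : ℂ)))) := by
      rw [← Complex.exp_add, ← Complex.exp_add]
      refine exp_eq_exp_int _ _ 1 ?_
      push_cast
      field_simp
      ring
    rw [hneg]
    linear_combination (∏ j ∈ Finset.range n, theta τ (z + (α:ℂ)*τ/(n:ℂ) + (j:ℂ)/(n:ℂ))) * hexp
  · -- z + 1/n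
    intro z
    unfold thetaA
    have hprod : (∏ j ∈ Finset.range n, theta τ (z + 1/(n:ℂ) + (α:ℂ)*τ/(n:ℂ) + (j:ℂ)/(n:ℂ)))
        = ∏ j ∈ Finset.range n, theta τ (z + (α:ℂ)*τ/(n:ℂ) + (j:ℂ)/(n:ℂ)) := by
      have h0 : (∏ j ∈ Finset.range n, theta τ (z + 1/(n:ℂ) + (α:ℂ)*τ/(n:ℂ) + (j:ℂ)/(n:ℂ)))
          = ∏ j ∈ Finset.range n, (fun j : ℕ => theta τ (z + (α:ℂ)*τ/(n:ℂ) + (j:ℂ)/(n:ℂ))) (j + 1) := by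
        refine Finset.prod_congr rfl fun j _ => ?_
        congr 1
        push_cast
        field_simp
        ring
      rw [h0]
      exact prod_range_cycle (fun j : ℕ => theta τ (z + (α:ℂ)*τ/(n:ℂ) + (j:ℂ)/(n:ℂ))) n (by
        show theta τ (z + (α:ℂ)*τ/(n:ℂ) + ((n:ℕ):ℂ)/(n:ℂ))
          = theta τ (z + (α:ℂ)*τ/(n:ℂ) + ((0:ℕ):ℂ)/(n:ℂ))
        rw [show z + (α:ℂ)*τ/(n:ℂ) + ((n:ℕ):ℂ)/(n:ℂ) = (z + (α:ℂ)*τ/(n:ℂ) + ((0:ℕ):ℂ)/(n:ℂ)) + 1 by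
          push_cast; field_simp; ring, theta_add_one])
    rw [hprod]
    have hexp : Complex.exp (2 * Real.pi * I *
          ((α : ℂ) * (z + 1/(n:ℂ)) + (α : ℂ) * ((α : ℂ) - (n : ℂ)) * τ / (2 * (n : ℂ)) +
            (α : ℂ) / (2 * (n : ℂ)))) =
        Complex.exp (2 * Real.pi * I * (α : ℂ) / (n : ℂ)) *
        Complex.exp (2 * Real.pi * I *
          ((α : ℂ) * z + (α : ℂ) * ((α : ℂ) - (n : ℂ)) * τ / (2 * (n : ℂ)) +
            (α : ℂ) / (2 * (n : ℂ)))) := by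
      rw [← Complex.exp_add]
      congr 1
      field_simp
      ring
    rw [hexp]
    ring
  · -- z + τ/n
    intro z
    unfold thetaA
    have hprod : (∏ j ∈ Finset.range n, theta τ (z + τ/(n:ℂ) + (α:ℂ)*τ/(n:ℂ) + (j:ℂ)/(n:ℂ)))
        = ∏ j ∈ Finset.range n, theta τ (z + ((α + 1 : ℤ):ℂ)*τ/(n:ℂ) + (j:ℂ)/(n:ℂ)) := by
      refine Finset.prod_congr rfl fun j _ => ?_
      congr 1
      push_cast
      field_simp
      ring
    rw [hprod]
    have hexp : Complex.exp (2 * Real.pi * I *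
          ((α : ℂ) * (z + τ/(n:ℂ)) + (α : ℂ) * ((α : ℂ) - (n : ℂ)) * τ / (2 * (n : ℂ)) +
            (α : ℂ) / (2 * (n : ℂ)))) =
        Complex.exp (-(2 * Real.pi * I) *
          (z + 1 / (2 * (n : ℂ)) - ((n : ℂ) - 1) / (2 * (n : ℂ)) * τ)) *
        Complex.exp (2 * Real.pi * I *
          (((α + 1 : ℤ):ℂ) * z + ((α + 1 : ℤ):ℂ) * (((α + 1 : ℤ):ℂ) - (n : ℂ)) * τ / (2 * (n : ℂ)) +
            ((α + 1 : ℤ):ℂ) / (2 * (n : ℂ)))) := by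
      rw [← Complex.exp_add]
      congr 1
      push_cast
      field_simp
      ring
    rw [hexp]
    ring
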